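/- A panoptigon of lattice diameter at least 7 is hyperelliptic: if P is a convex lattice polygon with a panoptigon point and P contains 8 collinear lattice points, then, after a suitable unimodular transformation placing the panoptigon point at the origin and the 8 collinear points on the line y = -1, all lattice points of P lie at heights 0, -1, or -2. -/

import Mathlib

/-- If `P` is a convex set containing the origin whose lattice points are all visible from
the origin, and `P` contains 8 consecutive lattice points `(a,-1),...,(a+7,-1)` at height
`-1`, then every lattice point of `P` has height between `-2` and `0`: `P` is hyperelliptic. -/
theorem long_diameter_hyperelliptic (P : Set (ℝ × ℝ)) (hconv : Convex ℝ P)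
    (h0 : ((0 : ℝ), (0 : ℝ)) ∈ P)
    (hvis : ∀ x y : ℤ, ((x : ℝ), (y : ℝ)) ∈ P → (x = 0 ∧ y = 0) ∨ Int.gcd x y = 1)
    (a : ℤ)
    (height : ∀ i : ℤ, 0 ≤ i → i ≤ 7 → (((a : ℝ) + (i : ℝ)), (-1 : ℝ)) ∈ P) :
    ∀ x y : ℤ, ((x : ℝ), (y : ℝ)) ∈ P → -2 ≤ y ∧ y ≤ 0 := by
  -- segment helper
  have seg : ∀ u1 u2 v1 v2 : ℝ, (u1, u2) ∈ P → (v1, v2) ∈ P → ∀ t : ℝ, 0 ≤ t → t ≤ 1 →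
      ((1-t)*u1 + t*v1, (1-t)*u2 + t*v2) ∈ P := by
    intro u1 u2 v1 v2 hu hv t ht0 ht1
    have h := hconv hu hv (by linarith : (0:ℝ) ≤ 1 - t) ht0 (by ring)
    simpa [Prod.ext_iff] using h
  -- horizontal segment helper
  have horiz : ∀ u v r h : ℝ, (u, h) ∈ P → (v, h) ∈ P → u ≤ r → r ≤ v → (r, h) ∈ P := by
    intro u v r h hu hv hur hrv
    rcases eq_or_lt_of_le (hur.trans hrv) with heq | hlt
    · have : r = u := le_antisymm (heq ▸ hrv) hur
      rwa [this]
    · set s : ℝ := (r - u) / (v - u) with hs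
      have hvu : 0 < v - u := by linarith
      have hs0 : 0 ≤ s := div_nonneg (by linarith) hvu.le
      have hs1 : s ≤ 1 := by rw [hs, div_le_one hvu]; linarith
      have key := seg u h v h hu hv s hs0 hs1
      convert key using 2
      · rw [hs]; field_simp; ring
      · ring
  intro x y hxy
  constructor
  · -- lower bound: -2 ≤ y
    by_contra hy
    push_neg at hy
    have hy3 : y ≤ -3 := by omega
    have hyR : (y:ℝ) ≤ -3 := by exact_mod_cast hy3
    have hneg : (y:ℝ) + 1 < 0 := by linarith
    have hne : (y:ℝ) + 1 ≠ 0 := ne_of_lt hneg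
    set t : ℝ := -1 / ((y:ℝ) + 1) with ht
    have ht0 : 0 ≤ t := div_nonneg_iff.mpr (Or.inr ⟨by norm_num, hneg.le⟩)
    have ht1 : t ≤ 1 := by
      rw [ht, div_le_one_iff]
      right; right; exact ⟨hneg, by linarith⟩
    -- crossing points at height -2
    have hd : ∀ c : ℝ, (c, (-1:ℝ)) ∈ P →
        ((c*((y:ℝ)+2) - (x:ℝ)) / ((y:ℝ)+1), (-2:ℝ)) ∈ P := by
      intro c hc
      have h := seg c (-1) (x:ℝ) (y:ℝ) hc hxy t ht0 ht1
      convert h using 2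
      · rw [ht]; field_simp; ring
      · rw [ht]; field_simp; ring
    have hA : ((a:ℝ), (-1:ℝ)) ∈ P := by
      have := height 0 (by norm_num) (by norm_num); norm_num at this; exact this
    have hB : ((a:ℝ) + 7, (-1:ℝ)) ∈ P := by
      have := height 7 (by norm_num) (by norm_num); push_cast at this; exact this
    have hd0 := hd (a:ℝ) hA
    have hd7 := hd ((a:ℝ)+7) hB
    set d0 : ℝ := ((a:ℝ)*((y:ℝ)+2) - (x:ℝ)) / ((y:ℝ)+1) with hd0def
    set d7 : ℝ := (((a:ℝ)+7)*((y:ℝ)+2) - (x:ℝ)) / ((y:ℝ)+1) with hd7def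
    have hdiff : d7 - d0 = 7*((y:ℝ)+2) / ((y:ℝ)+1) := by
      rw [hd0def, hd7def, div_sub_div_same, div_eq_div_iff hne hne]
      ring
    have hge2 : 2 ≤ d7 - d0 := by
      rw [hdiff, le_div_iff_of_neg hneg]
      linarith
    -- even integer in [d0, d7]
    set m : ℤ := 2 * ⌈d0 / 2⌉ with hm
    have hm0 : d0 ≤ (m:ℝ) := by
      have := Int.le_ceil (d0 / 2)
      push_cast [hm]
      linarith
    have hm7 : (m:ℝ) ≤ d7 := by
      have := Int.ceil_lt_add_one (d0 / 2)
      push_cast [hm]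
      linarith
    have hmem : ((m:ℝ), (-2:ℝ)) ∈ P := horiz d0 d7 (m:ℝ) (-2) hd0 hd7 hm0 hm7
    have hv := hvis m (-2) (by push_cast; exact hmem)
    rcases hv with ⟨_, h2⟩ | h2
    · omega
    · have hdvd : (2:ℤ) ∣ (Int.gcd m (-2) : ℤ) :=
        Int.dvd_coe_gcd ⟨⌈d0/2⌉, by rw [hm]⟩ ⟨-1, by norm_num⟩
      omega
  · -- upper bound: y ≤ 0
    by_contra hy
    push_neg at hy
    have hy1 : 1 ≤ y := hy
    have hyR : (1:ℝ) ≤ (y:ℝ) := by exact_mod_cast hy1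
    have hpos : (0:ℝ) < (y:ℝ) + 1 := by linarith
    have hne : (y:ℝ) + 1 ≠ 0 := ne_of_gt hpos
    set t : ℝ := (y:ℝ) / ((y:ℝ) + 1) with ht
    have ht0 : 0 ≤ t := div_nonneg (by linarith) hpos.le
    have ht1 : t ≤ 1 := by rw [ht, div_le_one hpos]; linarith
    -- crossing points at height 0
    have hc : ∀ c : ℝ, (c, (-1:ℝ)) ∈ P →
        (((x:ℝ) + (y:ℝ)*c) / ((y:ℝ)+1), (0:ℝ)) ∈ P := by
      intro c hcc
      have h := seg (x:ℝ) (y:ℝ) c (-1) hxy hcc t ht0 ht1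
      convert h using 2
      · rw [ht]; field_simp; ring
      · rw [ht]; field_simp; ring
    have hA : ((a:ℝ), (-1:ℝ)) ∈ P := by
      have := height 0 (by norm_num) (by norm_num); norm_num at this; exact this
    have hB : ((a:ℝ) + 7, (-1:ℝ)) ∈ P := by
      have := height 7 (by norm_num) (by norm_num); push_cast at this; exact this
    have hc0 := hc (a:ℝ) hA
    have hc7 := hc ((a:ℝ)+7) hB
    set c0 : ℝ := ((x:ℝ) + (y:ℝ)*(a:ℝ)) / ((y:ℝ)+1) with hc0def
    set c7 : ℝ := ((x:ℝ) + (y:ℝ)*((a:ℝ)+7)) / ((y:ℝ)+1) with hc7def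
    have hdiff : c7 - c0 = 7*(y:ℝ) / ((y:ℝ)+1) := by
      rw [hc0def, hc7def, div_sub_div_same, div_eq_div_iff hne hne]
      ring
    have hge3 : 3 ≤ c7 - c0 := by
      rw [hdiff, le_div_iff₀ hpos]
      linarith
    -- every integer in [c0, c7] has absolute value ≤ 1
    have key : ∀ m : ℤ, c0 ≤ (m:ℝ) → (m:ℝ) ≤ c7 → -1 ≤ m ∧ m ≤ 1 := by
      intro m hm0 hm7
      have hmem : ((m:ℝ), (0:ℝ)) ∈ P := horiz c0 c7 (m:ℝ) 0 hc0 hc7 hm0 hm7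
      have hv := hvis m 0 (by push_cast; exact hmem)
      rcases hv with ⟨h1, _⟩ | h1
      · omega
      · simp [Int.gcd] at h1
        omega
    have hkc : -1 ≤ ⌈c0⌉ ∧ ⌈c0⌉ ≤ 1 := by
      refine key ⌈c0⌉ (Int.le_ceil c0) ?_
      have := Int.ceil_lt_add_one c0
      linarith
    have hkf : -1 ≤ ⌊c7⌋ ∧ ⌊c7⌋ ≤ 1 := by
      refine key ⌊c7⌋ ?_ (Int.floor_le c7)
      have := Int.lt_floor_add_one c7
      linarith
    -- translate to integer inequalities
    have hc0gt : (-2:ℝ) < c0 := by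
      have h1 : (⌈c0⌉:ℝ) < c0 + 1 := Int.ceil_lt_add_one c0
      have h2 : (-1:ℝ) ≤ (⌈c0⌉:ℝ) := by exact_mod_cast hkc.1
      linarith
    have hc7lt : c7 < 2 := by
      have h1 : c7 < (⌊c7⌋:ℝ) + 1 := Int.lt_floor_add_one c7
      have h2 : ((⌊c7⌋:ℝ)) ≤ 1 := by exact_mod_cast hkf.2
      linarith
    have hN0 : (-2:ℝ) * ((y:ℝ)+1) < (x:ℝ) + (y:ℝ)*(a:ℝ) := by
      rw [hc0def, lt_div_iff₀ hpos] at hc0gt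
      linarith
    have hN7 : (x:ℝ) + (y:ℝ)*((a:ℝ)+7) < 2 * ((y:ℝ)+1) := by
      rw [hc7def, div_lt_iff₀ hpos] at hc7lt
      linarith
    have hN0' : (-2) * (y+1) < x + y*a := by exact_mod_cast hN0
    have hN7' : x + (y*a + 7*y) < 2 * (y+1) := by
      have : ((x:ℝ) + ((y:ℝ)*(a:ℝ) + 7*(y:ℝ))) < 2 * ((y:ℝ)+1) := by linarith [hN7]; 
      exact_mod_cast this
    omega
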